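/- Greedy exchange lemma for occurrence partitions: let T be a text and P a pattern, and suppose (Q₁, …, Q_m) is a sequence of nonempty strings concatenating to P such that each Q_i occurs in T or has length 1. If P₁ is the longest prefix of P that occurs in T (with |P₁| ≥ |Q₁|), then there exists a sequence (P₁, Q₂', …, Q_m') of at most m nonempty strings concatenating to P, each occurring in T or of length 1, whose first element is P₁. -/

import Mathlib

private lemma drop_pieces {α : Type*} (T : List α) :
    ∀ (Q : List (List α)) (k : ℕ), (∀ q ∈ Q, q ≠ []) →
    (∀ q ∈ Q, q <:+: T ∨ q.length = 1) →
    ∃ R : List (List α), R.length ≤ Q.length ∧ R.flatten = Q.flatten.drop k ∧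
      (∀ q ∈ R, q ≠ []) ∧ (∀ q ∈ R, q <:+: T ∨ q.length = 1) := by
  intro Q
  induction Q with
  | nil => intro k _ _; exact ⟨[], by simp⟩
  | cons q Q' ih =>
    intro k hne hocc
    by_cases hk : q.length ≤ k
    · obtain ⟨R, h1, h2, h3, h4⟩ := ih (k - q.length)
        (fun x hx => hne x (List.mem_cons_of_mem _ hx))
        (fun x hx => hocc x (List.mem_cons_of_mem _ hx))
      refine ⟨R, le_trans h1 (Nat.le_succ _), ?_, h3, h4⟩
      rw [h2, List.flatten_cons, List.drop_append,
        List.drop_eq_nil_of_le hk, List.nil_append]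
    · push_neg at hk
      refine ⟨q.drop k :: Q', by simp, ?_, ?_, ?_⟩
      · rw [List.flatten_cons, List.flatten_cons,
          List.drop_append_of_le_length hk.le]
      · intro x hx
        rcases List.mem_cons.mp hx with h | h
        · subst h
          simp [List.drop_eq_nil_iff]
          omega
        · exact hne x (List.mem_cons_of_mem _ h)
      · intro x hx
        rcases List.mem_cons.mp hx with h | h
        · subst h
          rcases hocc q List.mem_cons_self with h | h
          · exact Or.inl ((q.drop_suffix k).isInfix.trans h)
          · right; rw [List.length_drop]; omega
        · exact hocc x (List.mem_cons_of_mem _ h)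

theorem stmt12 {α : Type*} (T P P₁ : List α) (Q : List (List α)) (hQ : Q ≠ [])
    (hjoin : Q.flatten = P) (hne : ∀ q ∈ Q, q ≠ [])
    (hocc : ∀ q ∈ Q, q <:+: T ∨ q.length = 1)
    (hP1pre : P₁ <+: P) (hP1occ : P₁ <:+: T)
    (hlongest : ∀ Q' : List α, Q' <+: P → Q' <:+: T → Q'.length ≤ P₁.length)
    (hge : (Q.head hQ).length ≤ P₁.length) :
    ∃ R : List (List α), (P₁ :: R).length ≤ Q.length ∧ (P₁ :: R).flatten = P ∧
      (∀ q ∈ P₁ :: R, q ≠ []) ∧ (∀ q ∈ P₁ :: R, q <:+: T ∨ q.length = 1) := by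
  obtain ⟨q₀, Qt, rfl⟩ := List.exists_cons_of_ne_nil hQ
  simp only [List.head_cons] at hge
  have hq₀ : q₀ ≠ [] := hne q₀ List.mem_cons_self
  have hP₁ne : P₁ ≠ [] := by
    intro h; subst h
    simp at hge
    exact hq₀ hge
  obtain ⟨R, h1, h2, h3, h4⟩ := drop_pieces T Qt (P₁.length - q₀.length)
    (fun x hx => hne x (List.mem_cons_of_mem _ hx))
    (fun x hx => hocc x (List.mem_cons_of_mem _ hx))
  refine ⟨R, by simpa using h1, ?_, ?_, ?_⟩
  · obtain ⟨S, hS⟩ := hP1pre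
    rw [List.flatten_cons, h2]
    have : Qt.flatten.drop (P₁.length - q₀.length) = (q₀ ++ Qt.flatten).drop P₁.length := by
      rw [List.drop_append, List.drop_eq_nil_of_le hge, List.nil_append]
    rw [this, ← List.flatten_cons, hjoin, ← hS, List.drop_append]
    simp [← hS]
  · intro x hx
    rcases List.mem_cons.mp hx with h | h
    · subst h; exact hP₁ne
    · exact h3 x h
  · intro x hx
    rcases List.mem_cons.mp hx with h | h
    · subst h; exact Or.inl hP1occ
    · exact h4 x h
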